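/- Let A ∈ ℝ^{M×N} satisfy the null space property (NSP) of order s. Then every s-row sparse matrix X ∈ ℝ^{N×K} is the unique minimizer of ‖Z‖_{2,1} over all Z ∈ ℝ^{N×K} satisfying AZ = AX; that is, for every Z ∈ ℝ^{N×K} with AZ = AX and Z ≠ X, one has ‖Z‖_{2,1} > ‖X‖_{2,1}. -/

import Mathlib

open Matrix MeasureTheory Real
open scoped RealInnerProductSpace

noncomputable section

/-- The set of indices of nonzero rows of a matrix. -/
def rowSupport {N K : ℕ} (X : Matrix (Fin N) (Fin K) ℝ) : Set (Fin N) := {i | X i ≠ 0}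

/-- `X` is `s`-row sparse: at most `s` of its rows are nonzero. -/
def RowSparse {N K : ℕ} (s : ℕ) (X : Matrix (Fin N) (Fin K) ℝ) : Prop :=
  (rowSupport X).ncard ≤ s

/-- `‖X‖₀`: the number of nonzero rows of `X`. -/
def rowL0 {N K : ℕ} (X : Matrix (Fin N) (Fin K) ℝ) : ℕ := (rowSupport X).ncard

/-- `Σ_{s,r}`: matrices in `ℝ^{N×K}` that are `s`-row sparse and have rank at least `r`. -/
def SigmaSR {N K : ℕ} (s r : ℕ) : Set (Matrix (Fin N) (Fin K) ℝ) :=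
  {X | RowSparse s X ∧ r ≤ X.rank}

/-- The `ℓ_{2,1}` norm of a matrix: the sum of the Euclidean norms of its rows. -/
def l21norm {N K : ℕ} (X : Matrix (Fin N) (Fin K) ℝ) : ℝ :=
  ∑ i, Real.sqrt (∑ j, (X i j) ^ 2)

/-- `A` satisfies the null space property of order `s`: for every nonzero `x ∈ ker A`
and every index set `I` with `|I| ≤ s`, `‖x_I‖₁ < ‖x_{Iᶜ}‖₁`. -/
def NSP {M N : ℕ} (A : Matrix (Fin M) (Fin N) ℝ) (s : ℕ) : Prop :=
  ∀ x : Fin N → ℝ, A.mulVec x = 0 → x ≠ 0 →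
    ∀ I : Finset (Fin N), I.card ≤ s → ∑ i ∈ I, |x i| < ∑ i ∈ Iᶜ, |x i|

namespace NSPaux


variable {K : ℕ}

abbrev E (K : ℕ) := EuclideanSpace ℝ (Fin K)

def w (g : E K) : ℝ := Real.exp (-(1/2 : ℝ) * ‖g‖ ^ 2)

lemma w_pos (g : E K) : 0 < w g := Real.exp_pos _

lemma continuous_w : Continuous (w (K := K)) := by
  unfold w; fun_prop

lemma integrable_gauss (b : ℝ) (hb : 0 < b) :
    Integrable (fun g : E K => Real.exp (-b * ‖g‖ ^ 2)) := by
  have h := GaussianFourier.integrable_cexp_neg_mul_sq_norm_add (V := E K)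
    (b := (b : ℂ)) (by simpa using hb) 0 0
  have h2 := h.norm
  refine h2.congr (Filter.Eventually.of_forall fun g => ?_)
  simp [Complex.norm_exp, ← Complex.ofReal_pow]

lemma integrable_w : Integrable (w (K := K)) := by
  refine (integrable_gauss (1/2) (by norm_num)).congr
    (Filter.Eventually.of_forall fun g => ?_)
  simp [w]

lemma norm_mul_le_gauss (t : ℝ) :
    t * Real.exp (-(1/2) * t ^ 2) ≤ Real.exp (-(1/4) * t ^ 2) := by
  have h1 : t ≤ Real.exp ((1/4) * t ^ 2) :=
    le_trans (by nlinarith [sq_nonneg (t - 2)]) (Real.add_one_le_exp _)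
  have h2 : (0:ℝ) ≤ Real.exp (-(1/4) * t ^ 2) := (Real.exp_pos _).le
  calc t * Real.exp (-(1/2) * t ^ 2)
      = (t * Real.exp (-(1/4) * t ^ 2)) * Real.exp (-(1/4) * t ^ 2) := by
        rw [mul_assoc, ← Real.exp_add]; ring_nf
    _ ≤ (Real.exp ((1/4) * t ^ 2) * Real.exp (-(1/4) * t ^ 2)) * Real.exp (-(1/4) * t ^ 2) := by
        apply mul_le_mul_of_nonneg_right (mul_le_mul_of_nonneg_right h1 h2) h2
    _ = Real.exp (-(1/4) * t ^ 2) := by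
        rw [← Real.exp_add]; ring_nf; rw [Real.exp_zero, one_mul]

lemma integrable_norm_w : Integrable (fun g : E K => ‖g‖ * w g) := by
  refine (integrable_gauss (1/4) (by norm_num)).mono'
    (continuous_norm.mul continuous_w).aestronglyMeasurable ?_
  refine Filter.Eventually.of_forall fun g => ?_
  have h0 : 0 ≤ ‖g‖ * w g := mul_nonneg (norm_nonneg _) (w_pos g).le
  rw [Real.norm_eq_abs, abs_of_nonneg h0]
  exact norm_mul_le_gauss ‖g‖

lemma continuous_inner_w (v : E K) : Continuous (fun g : E K => |⟪v, g⟫| * w g) :=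
  ((continuous_const.inner continuous_id).abs).mul continuous_w

lemma integrable_inner_w (v : E K) : Integrable (fun g : E K => |⟪v, g⟫| * w g) := by
  refine (integrable_norm_w.const_mul ‖v‖).mono'
    (continuous_inner_w v).aestronglyMeasurable (Filter.Eventually.of_forall fun g => ?_)
  have h0 : 0 ≤ |⟪v, g⟫| * w g := mul_nonneg (abs_nonneg _) (w_pos g).le
  rw [Real.norm_eq_abs, abs_of_nonneg h0, ← mul_assoc]
  exact mul_le_mul_of_nonneg_right
    (by simpa using abs_real_inner_le_norm v g) (w_pos g).le

lemma phi_eq (hK : 0 < K) (v : E K) :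
    ∫ g : E K, |⟪v, g⟫| * w g = ‖v‖ * ∫ g : E K, |g ⟨0, hK⟩| * w g := by
  set i0 : Fin K := ⟨0, hK⟩
  rcases eq_or_ne v 0 with rfl | hv
  · simp
  · set e0 : E K := EuclideanSpace.single i0 (1:ℝ) with he0
    have hne0 : ‖e0‖ = 1 := by simp [he0, EuclideanSpace.norm_single]
    set u : E K := ‖v‖⁻¹ • v with hu
    have hnv : ‖v‖ ≠ 0 := norm_ne_zero_iff.2 hv
    have hnu : ‖u‖ = 1 := by
      rw [hu, norm_smul, norm_inv, norm_norm, inv_mul_cancel₀ hnv]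
    set R : E K ≃ₗᵢ[ℝ] E K := Submodule.reflection (ℝ ∙ (e0 - u))ᗮ with hR
    have hRe0 : R e0 = u := Submodule.reflection_sub (by rw [hne0, hnu])
    have hv2 : v = R (‖v‖ • e0) := by
      rw [LinearIsometryEquiv.map_smul, hRe0, hu, smul_inv_smul₀ hnv]
    have hinner : ∀ g : E K, ⟪v, R g⟫ = ‖v‖ * g i0 := by
      intro g
      calc ⟪v, R g⟫ = ⟪R (‖v‖ • e0), R g⟫ := by rw [← hv2]
        _ = ⟪‖v‖ • e0, g⟫ := R.inner_map_map _ _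
        _ = ‖v‖ * ⟪e0, g⟫ := real_inner_smul_left _ _ _
        _ = ‖v‖ * g i0 := by simp [he0, EuclideanSpace.inner_single_left]
    have mp : MeasurePreserving R := R.measurePreserving
    have emb : MeasurableEmbedding R := R.toHomeomorph.measurableEmbedding
    calc ∫ g : E K, |⟪v, g⟫| * w g
        = ∫ g : E K, |⟪v, R g⟫| * w (R g) := (mp.integral_comp emb _).symm
      _ = ∫ g : E K, ‖v‖ * (|g i0| * w g) := by
          refine integral_congr_ae (Filter.Eventually.of_forall fun g => ?_)
          have hw : w (R g) = w g := by simp [w]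
          show |⟪v, R g⟫| * w (R g) = ‖v‖ * (|g i0| * w g)
          rw [hinner g, abs_mul, abs_norm, hw, mul_assoc]
      _ = ‖v‖ * ∫ g : E K, |g i0| * w g := integral_const_mul _ _


def rowE {N K : ℕ} (V : Matrix (Fin N) (Fin K) ℝ) (i : Fin N) : E K :=
  (WithLp.equiv 2 (Fin K → ℝ)).symm (V i)

lemma rowE_inner {N : ℕ} (V : Matrix (Fin N) (Fin K) ℝ) (i : Fin N) (g : E K) :
    ⟪rowE V i, g⟫ = V.mulVec (WithLp.equiv 2 (Fin K → ℝ) g) i := by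
  simp [rowE, PiLp.inner_apply, RCLike.inner_apply, Matrix.mulVec, dotProduct, mul_comm]

lemma C_pos (hK : 0 < K) : 0 < ∫ g : E K, |g ⟨0, hK⟩| * w g := by
  set i0 : Fin K := ⟨0, hK⟩
  have hcproj : Continuous fun g : E K => g i0 := (EuclideanSpace.proj (𝕜 := ℝ) i0).continuous
  have hint : Integrable (fun g : E K => |g i0| * w g) := by
    refine integrable_norm_w.mono' (hcproj.abs.mul continuous_w).aestronglyMeasurable
      (Filter.Eventually.of_forall fun g => ?_)
    have h0 : 0 ≤ |g i0| * w g := mul_nonneg (abs_nonneg _) (w_pos g).le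
    rw [Real.norm_eq_abs, abs_of_nonneg h0]
    refine mul_le_mul_of_nonneg_right ?_ (w_pos g).le
    have := abs_real_inner_le_norm (EuclideanSpace.single i0 (1:ℝ)) g
    simpa [EuclideanSpace.inner_single_left, EuclideanSpace.norm_single] using this
  refine (integral_pos_iff_support_of_nonneg
    (fun g => mul_nonneg (abs_nonneg _) (w_pos g).le) hint).2 ?_
  have hopen : IsOpen {g : E K | g i0 ≠ 0} :=
    IsOpen.preimage hcproj isOpen_compl_singleton
  have hne : (EuclideanSpace.single i0 (1:ℝ)) ∈ {g : E K | g i0 ≠ 0} := by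
    simp [EuclideanSpace.single_apply]
  refine lt_of_lt_of_le (hopen.measure_pos volume ⟨_, hne⟩) (measure_mono ?_)
  intro g hg
  exact ne_of_gt (mul_pos (abs_pos.2 hg) (w_pos g))

lemma blockNSP {M N : ℕ} (hK : 0 < K) (A : Matrix (Fin M) (Fin N) ℝ) (s : ℕ)
    (hA : NSP A s) (V : Matrix (Fin N) (Fin K) ℝ) (hV : V ≠ 0) (hAV : A * V = 0)
    (I : Finset (Fin N)) (hI : I.card ≤ s) :
    ∑ i ∈ I, ‖rowE V i‖ < ∑ i ∈ Iᶜ, ‖rowE V i‖ := by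
  classical
  set i0 : Fin K := ⟨0, hK⟩
  set C : ℝ := ∫ g : E K, |g i0| * w g with hCdef
  have hC : 0 < C := C_pos hK
  set mv : E K → (Fin N → ℝ) := fun g => V.mulVec (WithLp.equiv 2 (Fin K → ℝ) g) with hmv
  have hker : ∀ g : E K, A.mulVec (mv g) = 0 := by
    intro g
    rw [hmv]
    show A *ᵥ (V *ᵥ _) = 0
    rw [Matrix.mulVec_mulVec, hAV, Matrix.zero_mulVec]
  have hint : ∀ i : Fin N, Integrable (fun g : E K => |mv g i| * w g) := fun i =>
    (integrable_inner_w (rowE V i)).congr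
      (Filter.Eventually.of_forall fun g => by simp only [hmv, rowE_inner])
  have hval : ∀ i : Fin N, ∫ g : E K, |mv g i| * w g = ‖rowE V i‖ * C := by
    intro i
    rw [hCdef, ← phi_eq hK (rowE V i)]
    exact integral_congr_ae (Filter.Eventually.of_forall fun g => by simp only [hmv, rowE_inner])
  have hFint : Integrable (fun g : E K => ∑ i ∈ I, |mv g i| * w g) :=
    integrable_finset_sum _ fun i _ => hint i
  have hGint : Integrable (fun g : E K => ∑ i ∈ Iᶜ, |mv g i| * w g) :=
    integrable_finset_sum _ fun i _ => hint i
  have hptle : ∀ g : E K,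
      (∑ i ∈ I, |mv g i| * w g) ≤ ∑ i ∈ Iᶜ, |mv g i| * w g := by
    intro g
    rcases eq_or_ne (mv g) 0 with h | h
    · simp [h]
    · rw [← Finset.sum_mul, ← Finset.sum_mul]
      exact mul_le_mul_of_nonneg_right (hA _ (hker g) h I hI).le (w_pos g).le
  have hpos : 0 < ∫ g : E K,
      ((∑ i ∈ Iᶜ, |mv g i| * w g) - ∑ i ∈ I, |mv g i| * w g) := by
    refine (integral_pos_iff_support_of_nonneg
      (fun g => sub_nonneg.2 (hptle g)) (hGint.sub hFint)).2 ?_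
    obtain ⟨i, j, hij⟩ : ∃ i j, V i j ≠ 0 := by
      by_contra h
      push_neg at h
      exact hV (by ext i j; simpa using h i j)
    have hcont : Continuous fun g : E K => mv g := by
      refine continuous_pi fun i => ?_
      simp only [hmv, Matrix.mulVec, dotProduct]
      exact continuous_finset_sum _ fun j _ =>
        continuous_const.mul (EuclideanSpace.proj (𝕜 := ℝ) j).continuous
    have hopen : IsOpen {g : E K | mv g ≠ 0} :=
      IsOpen.preimage hcont isOpen_compl_singleton
    have hne : ((WithLp.equiv 2 (Fin K → ℝ)).symm (Pi.single j 1)) ∈ {g : E K | mv g ≠ 0} := by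
      intro hc
      have : mv ((WithLp.equiv 2 (Fin K → ℝ)).symm (Pi.single j 1)) i = 0 := by rw [hc]; rfl
      rw [hmv] at this
      simp only [Equiv.apply_symm_apply, Matrix.mulVec_single_one] at this
      exact hij this
    refine lt_of_lt_of_le (hopen.measure_pos volume ⟨_, hne⟩) (measure_mono ?_)
    intro g hg
    have hlt := hA _ (hker g) hg I hI
    have : (0:ℝ) < (∑ i ∈ Iᶜ, |mv g i| * w g) - ∑ i ∈ I, |mv g i| * w g := by
      rw [← Finset.sum_mul, ← Finset.sum_mul, ← sub_mul]
      exact mul_pos (sub_pos.2 hlt) (w_pos g)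
    exact ne_of_gt this
  rw [integral_sub hGint hFint, integral_finset_sum _ (fun i _ => hint i),
    integral_finset_sum _ (fun i _ => hint i)] at hpos
  simp only [hval, ← Finset.sum_mul] at hpos
  have := sub_pos.1 hpos
  exact lt_of_mul_lt_mul_right (by linarith) hC.le


end NSPaux

open NSPaux in
/-- If `A` satisfies the NSP of order `s`, then every `s`-row sparse `X` is the unique
minimizer of `‖Z‖_{2,1}` subject to `A * Z = A * X`. -/
theorem statement_7 {M N K : ℕ} (A : Matrix (Fin M) (Fin N) ℝ) (s : ℕ) (hA : NSP A s)
    (X : Matrix (Fin N) (Fin K) ℝ) (hX : RowSparse s X)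
    (Z : Matrix (Fin N) (Fin K) ℝ) (hZ : A * Z = A * X) (hne : Z ≠ X) :
    l21norm X < l21norm Z := by
  classical
  rcases Nat.eq_zero_or_pos K with hK0 | hK
  · exact absurd (by subst hK0; ext i j; exact j.elim0) hne
  · set V := Z - X with hVdef
    have hV : V ≠ 0 := sub_ne_zero.2 hne
    have hAV : A * V = 0 := by rw [hVdef, Matrix.mul_sub, hZ, sub_self]
    have hfin : (rowSupport X).Finite := Set.toFinite _
    set S : Finset (Fin N) := hfin.toFinset with hS
    have hScard : S.card ≤ s := by
      rw [hS, ← Set.ncard_eq_toFinset_card _ hfin]; exact hX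
    have key := blockNSP hK A s hA V hV hAV S hScard
    have hrn : ∀ (Y : Matrix (Fin N) (Fin K) ℝ) (i : Fin N),
        Real.sqrt (∑ j, (Y i j) ^ 2) = ‖rowE Y i‖ := by
      intro Y i
      rw [EuclideanSpace.norm_eq]
      congr 1
      refine Finset.sum_congr rfl fun j _ => ?_
      simp [rowE, Real.norm_eq_abs, sq_abs]
    have hrowX : ∀ i, rowE X i = rowE Z i - rowE V i := by
      intro i
      simp only [rowE, hVdef]
      ext j
      simp [Matrix.sub_apply]
    have hXc : ∀ i ∉ S, ‖rowE X i‖ = 0 := by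
      intro i hi
      have hx : X i = 0 := by
        by_contra h
        exact hi (by rw [hS, hfin.mem_toFinset]; exact h)
      simp [rowE, hx]
    have hZV : ∀ i ∉ S, ‖rowE Z i‖ = ‖rowE V i‖ := by
      intro i hi
      have h := hrowX i
      have hx : ‖rowE X i‖ = 0 := hXc i hi
      have : rowE X i = 0 := norm_eq_zero.1 hx
      rw [this] at h
      rw [show rowE Z i = rowE V i from by linear_combination (norm := module) -h]
    have hl21X : l21norm X = ∑ i ∈ S, ‖rowE X i‖ := by
      unfold l21norm
      simp only [hrn]
      rw [← Finset.sum_add_sum_compl S]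
      rw [Finset.sum_eq_zero fun i hi => hXc i (Finset.mem_compl.1 hi), add_zero]
    have hl21Z : l21norm Z = ∑ i ∈ S, ‖rowE Z i‖ + ∑ i ∈ Sᶜ, ‖rowE V i‖ := by
      unfold l21norm
      simp only [hrn]
      rw [← Finset.sum_add_sum_compl S]
      congr 1
      exact Finset.sum_congr rfl fun i hi => hZV i (Finset.mem_compl.1 hi)
    have htri : ∑ i ∈ S, ‖rowE X i‖ - ∑ i ∈ S, ‖rowE V i‖ ≤ ∑ i ∈ S, ‖rowE Z i‖ := by
      rw [← Finset.sum_sub_distrib]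
      refine Finset.sum_le_sum fun i _ => ?_
      have h1 : ‖rowE X i‖ ≤ ‖rowE Z i‖ + ‖rowE V i‖ := by
        rw [hrowX i]; exact norm_sub_le _ _
      linarith
    rw [hl21X, hl21Z]
    linarith
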